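/- Let v₁ > v₂ > … > v_n be distinct real values (so v₁ is the maximum), let p ≤ 0.4, δ ∈ (0,1), and let r be an index with r − 1 ≥ 5·√(2·n·ln(2/δ)). For each unordered pair {i,j} with i ≠ j, let E_{ij} be independent Bernoulli random variables with ℙ(E_{ij} = 1) = p (the comparison of v_i and v_j is answered incorrectly), and for each i define Count(v_i) = |{j ≠ i : the (possibly erroneous) comparison declares v_j < v_i}| = Σ_{j ≠ i} 1{(v_j < v_i) XOR (E_{ij} = 1)}. Then ℙ(Count(v₁) > Count(v_r)) ≥ 1 − δ. -/

import Mathlib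

set_option maxHeartbeats 1000000
open MeasureTheory ProbabilityTheory

lemma aux_exp_bound {x : ℝ} (h1 : -(0.2:ℝ) ≤ x) (h2 : x ≤ 0.4) :
    Real.exp x ≤ 1 + x + 0.6 * x ^ 2 := by
  have hx : |x| ≤ 1 := abs_le.mpr ⟨by linarith, by linarith⟩
  have h := Real.exp_bound hx (n := 3) (by norm_num)
  have hsum : ∑ m ∈ Finset.range 3, x ^ m / m.factorial = 1 + x + x ^ 2 / 2 := by
    simp [Finset.sum_range_succ, Nat.factorial]
  rw [hsum] at h
  have h3 : |x| ^ 3 ≤ 0.4 * x ^ 2 := by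
    have hax : |x| ≤ 0.4 := abs_le.mpr ⟨by linarith, h2⟩
    calc |x| ^ 3 = |x| * |x| ^ 2 := by ring
    _ ≤ 0.4 * |x| ^ 2 := by nlinarith [sq_nonneg (|x|)]
    _ = 0.4 * x ^ 2 := by rw [sq_abs]
  have h4 := (abs_sub_le_iff.mp h).1
  have h5 : (((3:ℕ).succ : ℝ) / ((Nat.factorial 3 : ℝ) * (3:ℕ))) = 2 / 9 := by
    norm_num [Nat.factorial]
  rw [h5] at h4
  nlinarith [sq_nonneg x, abs_nonneg x]

lemma aux_key {n : ℕ} (z r : Fin n) (g : Fin n × Fin n → ℝ) :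
    (∑ q : {q : Fin n × Fin n // q.1 < q.2},
      (((if (q : Fin n × Fin n).1 = z then (1:ℝ) else 0)
        + (if (q : Fin n × Fin n).2 = r then 1 else 0)
        - (if (q : Fin n × Fin n).1 = r then 1 else 0)) * g q))
    = (∑ j ∈ Finset.Ioi z, g (z, j)) + (∑ j ∈ Finset.Iio r, g (j, r))
      - (∑ j ∈ Finset.Ioi r, g (r, j)) := by
  classical
  set s : Finset (Fin n × Fin n) := Finset.univ.filter (fun q => q.1 < q.2) with hs
  have hmem : ∀ q : Fin n × Fin n, q ∈ s ↔ q.1 < q.2 := by simp [hs]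
  rw [← Finset.sum_subtype s hmem
    (fun q : Fin n × Fin n => ((if q.1 = z then (1:ℝ) else 0)
        + (if q.2 = r then 1 else 0) - (if q.1 = r then 1 else 0)) * g q)]
  have split : ∀ q ∈ s, ((if q.1 = z then (1:ℝ) else 0)
        + (if q.2 = r then 1 else 0) - (if q.1 = r then 1 else 0)) * g q
      = (if q.1 = z then g q else 0) + (if q.2 = r then g q else 0)
        - (if q.1 = r then g q else 0) := by
    intro q _; split_ifs <;> ring
  rw [Finset.sum_congr rfl split]
  rw [Finset.sum_sub_distrib, Finset.sum_add_distrib]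
  have e1 : s.filter (fun q => q.1 = z) = {z} ×ˢ Finset.Ioi z := by
    ext ⟨i, j⟩
    simp only [hs, Finset.mem_filter, Finset.mem_univ, true_and, Finset.mem_product,
      Finset.mem_singleton, Finset.mem_Ioi]
    constructor
    · rintro ⟨h1, h2⟩; exact ⟨h2, h2 ▸ h1⟩
    · rintro ⟨h1, h2⟩; exact ⟨h1 ▸ h2, h1⟩
  have e2 : s.filter (fun q => q.2 = r) = Finset.Iio r ×ˢ {r} := by
    ext ⟨i, j⟩
    simp only [hs, Finset.mem_filter, Finset.mem_univ, true_and, Finset.mem_product,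
      Finset.mem_singleton, Finset.mem_Iio]
    constructor
    · rintro ⟨h1, h2⟩; exact ⟨h2 ▸ h1, h2⟩
    · rintro ⟨h1, h2⟩; exact ⟨h2 ▸ h1, h2⟩
  have e3 : s.filter (fun q => q.1 = r) = {r} ×ˢ Finset.Ioi r := by
    ext ⟨i, j⟩
    simp only [hs, Finset.mem_filter, Finset.mem_univ, true_and, Finset.mem_product,
      Finset.mem_singleton, Finset.mem_Ioi]
    constructor
    · rintro ⟨h1, h2⟩; exact ⟨h2, h2 ▸ h1⟩
    · rintro ⟨h1, h2⟩; exact ⟨h1 ▸ h2, h1⟩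
  rw [← Finset.sum_filter, ← Finset.sum_filter, ← Finset.sum_filter, e1, e2, e3,
    Finset.sum_product, Finset.sum_product, Finset.sum_product, Finset.sum_singleton,
    Finset.sum_singleton]
  congr 2
  exact Finset.sum_congr rfl (fun i _ => Finset.sum_singleton _ _)

theorem stmt_15 (n : ℕ) (hn : 0 < n) (v : Fin n → ℝ) (hv : StrictAnti v)
    (p : ℝ) (hp : p ≤ 0.4) (δ : ℝ) (hδ : δ ∈ Set.Ioo (0 : ℝ) 1)
    (r : Fin n) (hr : 5 * Real.sqrt (2 * (n : ℝ) * Real.log (2 / δ)) ≤ (r : ℝ))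
    {Ω : Type*} [MeasurableSpace Ω] (P : Measure Ω) [IsProbabilityMeasure P]
    (E : Fin n → Fin n → Ω → Bool) (hmeas : ∀ i j, Measurable (E i j))
    (hsymm : ∀ i j, E i j = E j i)
    (herr : ∀ i j, i ≠ j → (P {ω | E i j ω = true}).toReal = p)
    (hindep : iIndepFun
      (fun ij : {q : Fin n × Fin n // q.1 < q.2} => E (ij : Fin n × Fin n).1
        (ij : Fin n × Fin n).2) P) :
    1 - δ ≤
      (P {ω |
        ((Finset.univ.erase r).filter
          (fun j => decide (v j < v r) ≠ E r j ω)).card <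
        ((Finset.univ.erase (⟨0, hn⟩ : Fin n)).filter
          (fun j => decide (v j < v ⟨0, hn⟩) ≠ E ⟨0, hn⟩ j ω)).card}).toReal := by
  classical
  obtain ⟨hδ0, hδ1⟩ := hδ
  set z : Fin n := ⟨0, hn⟩ with hz
  set L : ℝ := Real.log (2 / δ) with hLdef
  have hL : 0 < L := Real.log_pos (by rw [lt_div_iff₀ hδ0]; linarith)
  have hn' : (0:ℝ) < n := by exact_mod_cast hn
  have hrpos : (0:ℝ) < (r : ℝ) :=
    lt_of_lt_of_le (by positivity) hr
  have hr1 : 1 ≤ (r : ℕ) := by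
    have : 0 < (r : ℕ) := by exact_mod_cast hrpos
    omega
  have hzr : z < r := by
    rw [Fin.lt_def]
    exact hr1
  have hzner : z ≠ r := ne_of_lt hzr
  have hp0 : 0 ≤ p := by
    rw [← herr z r hzner]; exact ENNReal.toReal_nonneg
  have hrn : ((r : ℕ) : ℝ) < (n : ℝ) := by exact_mod_cast r.isLt
  have hr2 : 50 * (n:ℝ) * L ≤ ((r:ℕ):ℝ) ^ 2 := by
    nlinarith [Real.sq_sqrt (show (0:ℝ) ≤ 2 * (n:ℝ) * L by positivity),
      Real.sqrt_nonneg (2 * (n:ℝ) * L), hr, hrpos]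
  set rv : ℝ := ((r : ℕ) : ℝ) with hrv
  set t : ℝ := rv / (5 * (n:ℝ)) with ht
  have ht0 : 0 ≤ t := by positivity
  have ht2 : t ≤ 0.2 := by
    rw [ht, div_le_iff₀ (by positivity)]
    nlinarith
  -- coefficient function
  set cf : Fin n × Fin n → ℝ := fun q =>
    (if q.1 = z then (1:ℝ) else 0) + (if q.2 = r then 1 else 0)
      - (if q.1 = r then 1 else 0) with hcf
  have hcf_lb : ∀ q, -1 ≤ cf q := by
    intro q; simp only [hcf]; split_ifs <;> norm_num
  have hcf_ub : ∀ q, cf q ≤ 2 := by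
    intro q; simp only [hcf]; split_ifs <;> norm_num
  -- the independent real-valued family
  set g : {q : Fin n × Fin n // q.1 < q.2} → Bool → ℝ :=
    fun q b => cf q.val * (if b = true then 1 else 0) with hg
  have hgmeas : ∀ q, Measurable (g q) := fun q => measurable_from_top
  set Y : {q : Fin n × Fin n // q.1 < q.2} → Ω → ℝ :=
    fun q => g q ∘ (E (q : Fin n × Fin n).1 (q : Fin n × Fin n).2) with hY
  have hYmeas : ∀ q, Measurable (Y q) := fun q => (hgmeas q).comp (hmeas _ _)
  have hYindep : iIndepFun Y P := hindep.comp g hgmeas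
  have hEset : ∀ i j, MeasurableSet {ω | E i j ω = true} :=
    fun i j => hmeas i j (measurableSet_singleton true)
  -- pointwise identity for exp (t * Y q ω)
  have hexp_eq : ∀ q (ω : Ω), Real.exp (t * Y q ω)
      = 1 + Set.indicator {ω' | E (q : Fin n × Fin n).1 (q : Fin n × Fin n).2 ω' = true}
          (fun _ => Real.exp (t * cf q.val) - 1) ω := by
    intro q ω
    by_cases h : E (q : Fin n × Fin n).1 (q : Fin n × Fin n).2 ω = true
    · rw [Set.indicator_of_mem
        (show ω ∈ {ω' | E (q : Fin n × Fin n).1 (q : Fin n × Fin n).2 ω' = true} from h)]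
      simp only [hY, hg, Function.comp_apply, h, if_true, mul_one]
      ring
    · rw [Set.indicator_of_notMem
        (show ω ∉ {ω' | E (q : Fin n × Fin n).1 (q : Fin n × Fin n).2 ω' = true} from h)]
      simp only [hY, hg, Function.comp_apply, h, if_false, mul_zero]
      simp
  have hint : ∀ q, Integrable (fun ω => Real.exp (t * Y q ω)) P := by
    intro q
    rw [show (fun ω => Real.exp (t * Y q ω))
        = fun ω => 1 + Set.indicator _ (fun _ => Real.exp (t * cf q.val) - 1) ω
      from funext (hexp_eq q)]
    exact (integrable_const 1).add ((integrable_const _).indicator (hEset _ _))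
  have hmgf : ∀ q, mgf (Y q) P t = 1 + p * (Real.exp (t * cf q.val) - 1) := by
    intro q
    rw [mgf, show (fun ω => Real.exp (t * Y q ω))
        = fun ω => 1 + Set.indicator _ (fun _ => Real.exp (t * cf q.val) - 1) ω
      from funext (hexp_eq q),
      integral_add (integrable_const 1) ((integrable_const _).indicator (hEset _ _)),
      integral_const, integral_indicator_const _ (hEset _ _),
      measureReal_def, measureReal_def, herr _ _ (ne_of_lt q.prop)]
    simp [smul_eq_mul]
  have hmgf_le : ∀ q, mgf (Y q) P t ≤ Real.exp (p * (Real.exp (t * cf q.val) - 1)) := by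
    intro q
    rw [hmgf q]
    have := Real.add_one_le_exp (p * (Real.exp (t * cf q.val) - 1))
    linarith
  have hmgf_nonneg : ∀ q, 0 ≤ mgf (Y q) P t := by
    intro q
    rw [hmgf q]
    nlinarith [Real.exp_pos (t * cf q.val), mul_nonneg hp0 (Real.exp_pos (t * cf q.val)).le]
  set S : Ω → ℝ := ∑ q : {q : Fin n × Fin n // q.1 < q.2}, Y q with hS
  have hSmeas : Measurable S := by
    have hfun : S = fun ω => ∑ q : {q : Fin n × Fin n // q.1 < q.2}, Y q ω :=
      funext fun ω => Finset.sum_apply _ _ _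
    rw [hfun]; exact Finset.measurable_sum _ (fun q _ => hYmeas q)
  have hSint : Integrable (fun ω => Real.exp (t * S ω)) P :=
    hYindep.integrable_exp_mul_sum hYmeas (fun q _ => hint q)
  have hch := measure_ge_le_exp_mul_mgf (X := S) (μ := P) (t := t) rv ht0 hSint
  have hmgfS : mgf S P t = ∏ q, mgf (Y q) P t := hYindep.mgf_sum hYmeas Finset.univ
  -- sum of coefficients and their squares
  have hsum_cf : ∑ q : {q : Fin n × Fin n // q.1 < q.2}, cf q.val = 2 * rv := by
    have h := aux_key z r (fun _ => (1:ℝ))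
    simp only [mul_one] at h
    rw [show (fun q : {q : Fin n × Fin n // q.1 < q.2} => cf q.val)
        = fun q : {q : Fin n × Fin n // q.1 < q.2} =>
          ((if (q : Fin n × Fin n).1 = z then (1:ℝ) else 0)
        + (if (q : Fin n × Fin n).2 = r then 1 else 0)
        - (if (q : Fin n × Fin n).1 = r then 1 else 0)) from rfl]
    rw [h]
    simp only [Finset.sum_const, nsmul_eq_mul, mul_one, Fin.card_Ioi, Fin.card_Iio]
    have h1 : ((n - 1 - (z : ℕ) : ℕ) : ℝ) = (n:ℝ) - 1 := by
      have : (z : ℕ) = 0 := rfl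
      rw [this]
      have : n - 1 - 0 = n - 1 := rfl
      rw [this, Nat.cast_sub hn]
      simp
    have h2 : ((n - 1 - (r : ℕ) : ℕ) : ℝ) = (n:ℝ) - 1 - rv := by
      rw [Nat.cast_sub (by omega), Nat.cast_sub hn]
      simp [hrv]
    rw [h1, h2]
    ring
  have hsum_cf2 : ∑ q : {q : Fin n × Fin n // q.1 < q.2}, (cf q.val) ^ 2 = 2 * (n:ℝ) := by
    have h := aux_key z r cf
    rw [show (fun q : {q : Fin n × Fin n // q.1 < q.2} => (cf q.val) ^ 2)
        = fun q : {q : Fin n × Fin n // q.1 < q.2} =>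
          ((if (q : Fin n × Fin n).1 = z then (1:ℝ) else 0)
        + (if (q : Fin n × Fin n).2 = r then 1 else 0)
        - (if (q : Fin n × Fin n).1 = r then 1 else 0)) * cf q from funext (fun q => by
          rw [sq])]
    rw [h]
    have s1 : ∑ j ∈ Finset.Ioi z, cf (z, j) = ((n:ℝ) - 1) + 1 := by
      have : ∀ j ∈ Finset.Ioi z, cf (z, j) = 1 + (if j = r then (1:ℝ) else 0) := by
        intro j _
        simp [hcf, hzner]
      rw [Finset.sum_congr rfl this, Finset.sum_add_distrib, Finset.sum_const,
        Finset.sum_ite_eq' (Finset.Ioi z) r (fun _ => (1:ℝ))]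
      simp only [Finset.mem_Ioi, hzr, if_true, nsmul_eq_mul, mul_one, Fin.card_Ioi]
      have h1 : ((n - 1 - (z : ℕ) : ℕ) : ℝ) = (n:ℝ) - 1 := by
        have hz0 : (z : ℕ) = 0 := rfl
        rw [hz0]
        have : n - 1 - 0 = n - 1 := rfl
        rw [this, Nat.cast_sub hn]; simp
      rw [h1]
    have s2 : ∑ j ∈ Finset.Iio r, cf (j, r) = rv + 1 := by
      have : ∀ j ∈ Finset.Iio r, cf (j, r) = 1 + (if j = z then (1:ℝ) else 0) := by
        intro j hj
        have hjr : j ≠ r := ne_of_lt (Finset.mem_Iio.mp hj)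
        simp [hcf, hjr]
        ring
      rw [Finset.sum_congr rfl this, Finset.sum_add_distrib, Finset.sum_const,
        Finset.sum_ite_eq' (Finset.Iio r) z (fun _ => (1:ℝ))]
      simp only [Finset.mem_Iio, hzr, if_true, nsmul_eq_mul, mul_one, Fin.card_Iio]
      rfl
    have s3 : ∑ j ∈ Finset.Ioi r, cf (r, j) = -((n:ℝ) - 1 - rv) := by
      have : ∀ j ∈ Finset.Ioi r, cf (r, j) = -1 := by
        intro j hj
        have hjr : j ≠ r := (ne_of_lt (Finset.mem_Ioi.mp hj)).symm
        have hrz : r ≠ z := hzner.symm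
        simp [hcf, hjr, hrz]
      rw [Finset.sum_congr rfl this, Finset.sum_const]
      simp only [nsmul_eq_mul, mul_neg, mul_one, Fin.card_Ioi]
      have h2 : ((n - 1 - (r : ℕ) : ℕ) : ℝ) = (n:ℝ) - 1 - rv := by
        rw [Nat.cast_sub (by omega), Nat.cast_sub hn]
        simp [hrv]
      rw [h2]
    rw [s1, s2, s3]
    ring
  -- per-term bound and total exponent bound
  have hterm : ∀ q : {q : Fin n × Fin n // q.1 < q.2},
      p * (Real.exp (t * cf q.val) - 1)
        ≤ p * (t * cf q.val) + 0.6 * p * (t ^ 2 * (cf q.val) ^ 2) := by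
    intro q
    clear_value t cf
    have hq1 := hcf_lb q.val
    have hq2 := hcf_ub q.val
    have hm1 : 0 ≤ t * (cf q.val + 1) := mul_nonneg ht0 (by linarith)
    have hm2 : 0 ≤ t * (2 - cf q.val) := mul_nonneg ht0 (by linarith)
    have hx1 : -(0.2:ℝ) ≤ t * cf q.val := by nlinarith
    have hx2 : t * cf q.val ≤ 0.4 := by nlinarith
    have hb := aux_exp_bound hx1 hx2
    have : Real.exp (t * cf q.val) - 1 ≤ t * cf q.val + 0.6 * (t * cf q.val) ^ 2 := by
      linarith
    nlinarith [mul_le_mul_of_nonneg_left this hp0]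
  have hsum_bound : ∑ q : {q : Fin n × Fin n // q.1 < q.2},
      p * (Real.exp (t * cf q.val) - 1) ≤ p * t * (2 * rv) + 0.6 * p * t ^ 2 * (2 * (n:ℝ)) := by
    calc ∑ q : {q : Fin n × Fin n // q.1 < q.2}, p * (Real.exp (t * cf q.val) - 1)
        ≤ ∑ q : {q : Fin n × Fin n // q.1 < q.2},
            (p * (t * cf q.val) + 0.6 * p * (t ^ 2 * (cf q.val) ^ 2)) :=
          Finset.sum_le_sum (fun q _ => hterm q)
      _ = p * t * (∑ q : {q : Fin n × Fin n // q.1 < q.2}, cf q.val)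
          + 0.6 * p * t ^ 2 * (∑ q : {q : Fin n × Fin n // q.1 < q.2}, (cf q.val) ^ 2) := by
          rw [Finset.sum_add_distrib, Finset.mul_sum, Finset.mul_sum]
          congr 1
          · exact Finset.sum_congr rfl (fun q _ => by ring)
          · exact Finset.sum_congr rfl (fun q _ => by ring)
      _ = p * t * (2 * rv) + 0.6 * p * t ^ 2 * (2 * (n:ℝ)) := by
          rw [hsum_cf, hsum_cf2]
  -- the probability of the bad event is at most δ
  have hbad : (P {ω | rv ≤ S ω}).toReal ≤ δ := by
    refine le_trans hch ?_
    have hprod : mgf S P t ≤ Real.exp (∑ q : {q : Fin n × Fin n // q.1 < q.2},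
        p * (Real.exp (t * cf q.val) - 1)) := by
      rw [hmgfS]
      calc ∏ q : {q : Fin n × Fin n // q.1 < q.2}, mgf (Y q) P t
          ≤ ∏ q : {q : Fin n × Fin n // q.1 < q.2},
              Real.exp (p * (Real.exp (t * cf q.val) - 1)) :=
            Finset.prod_le_prod (fun q _ => hmgf_nonneg q) (fun q _ => hmgf_le q)
        _ = Real.exp (∑ q : {q : Fin n × Fin n // q.1 < q.2},
              p * (Real.exp (t * cf q.val) - 1)) := (Real.exp_sum _ _).symm
    have h1 : Real.exp (-t * rv) * mgf S P t
        ≤ Real.exp (-t * rv + (p * t * (2 * rv) + 0.6 * p * t ^ 2 * (2 * (n:ℝ)))) := by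
      rw [Real.exp_add]
      exact mul_le_mul_of_nonneg_left
        (le_trans hprod (Real.exp_le_exp.mpr hsum_bound)) (Real.exp_pos _).le
    refine le_trans h1 ?_
    have hexp_le : -t * rv + (p * t * (2 * rv) + 0.6 * p * t ^ 2 * (2 * (n:ℝ)))
        ≤ Real.log δ := by
      have h5 : t * (5 * (n:ℝ)) = rv := by
        rw [ht]; field_simp
      have step1 : -t * rv + (p * t * (2 * rv) + 0.6 * p * t ^ 2 * (2 * (n:ℝ)))
          ≤ -(0.2) * t * rv + 0.48 * t ^ 2 * (n:ℝ) := by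
        nlinarith [mul_nonneg (mul_nonneg (sub_nonneg.mpr hp) ht0) hrpos.le,
          mul_nonneg (mul_nonneg (sub_nonneg.mpr hp) (sq_nonneg t)) hn'.le]
      have step2 : -(0.2) * t * rv + 0.48 * t ^ 2 * (n:ℝ) ≤ -(1.04) * L := by
        nlinarith [hr2, h5, hn', sq_nonneg t]
      have hlog : Real.log δ = Real.log 2 - L := by
        rw [hLdef, Real.log_div (by norm_num) (ne_of_gt hδ0)]
        ring
      have hlog2 : 0 ≤ Real.log 2 := Real.log_nonneg one_le_two
      linarith
    calc Real.exp (-t * rv + (p * t * (2 * rv) + 0.6 * p * t ^ 2 * (2 * (n:ℝ))))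
        ≤ Real.exp (Real.log δ) := Real.exp_le_exp.mpr hexp_le
      _ = δ := Real.exp_log hδ0
  -- deterministic inclusion
  have hsub : {ω | rv ≤ S ω}ᶜ ⊆ {ω |
        ((Finset.univ.erase r).filter
          (fun j => decide (v j < v r) ≠ E r j ω)).card <
        ((Finset.univ.erase z).filter
          (fun j => decide (v j < v z) ≠ E z j ω)).card} := by
    intro ω hω
    have hlt : S ω < rv := not_le.mp hω
    -- compute S ω as a combination of cardinalities
    set a1 : ℕ := ((Finset.univ.erase z).filter (fun j => E z j ω = true)).card with ha1
    set b1 : ℕ := ((Finset.Iio r).filter (fun j => E r j ω = true)).card with hb1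
    set a2 : ℕ := ((Finset.Ioi r).filter (fun j => E r j ω = true)).card with ha2def
    set a2' : ℕ := ((Finset.Ioi r).filter (fun j => ¬(E r j ω = true))).card with ha2'
    have hIoiz : Finset.Ioi z = Finset.univ.erase z := by
      ext j
      simp only [Finset.mem_Ioi, Finset.mem_erase, Finset.mem_univ, and_true]
      rw [Fin.lt_def]
      have : (z : ℕ) = 0 := rfl
      rw [this]
      rw [Fin.ne_iff_vne]
      simp [this]
      omega
    have hSω : S ω = (a1:ℝ) + (b1:ℝ) - (a2:ℝ) := by
      have happ : S ω = ∑ q : {q : Fin n × Fin n // q.1 < q.2}, Y q ω := by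
        rw [hS]; exact Finset.sum_apply _ _ _
      have hYval : ∀ q : {q : Fin n × Fin n // q.1 < q.2}, Y q ω
          = ((if (q : Fin n × Fin n).1 = z then (1:ℝ) else 0)
        + (if (q : Fin n × Fin n).2 = r then 1 else 0)
        - (if (q : Fin n × Fin n).1 = r then 1 else 0))
          * (if E (q : Fin n × Fin n).1 (q : Fin n × Fin n).2 ω = true then (1:ℝ) else 0) := by
        intro q; rfl
      rw [happ, Finset.sum_congr rfl (fun q _ => hYval q),
        aux_key z r (fun q => if E q.1 q.2 ω = true then (1:ℝ) else 0)]
      have t1 : ∑ j ∈ Finset.Ioi z, (if E z j ω = true then (1:ℝ) else 0) = (a1:ℝ) := by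
        rw [Finset.sum_boole, ha1, hIoiz]
      have t2 : ∑ j ∈ Finset.Iio r, (if E j r ω = true then (1:ℝ) else 0) = (b1:ℝ) := by
        rw [Finset.sum_congr rfl (fun j _ => by rw [hsymm j r]), Finset.sum_boole, hb1]
      have t3 : ∑ j ∈ Finset.Ioi r, (if E r j ω = true then (1:ℝ) else 0) = (a2:ℝ) := by
        rw [Finset.sum_boole, ha2def]
      rw [t1, t2, t3]
    have hlt' : a1 + b1 < (r : ℕ) + a2 := by
      have h : (a1:ℝ) + (b1:ℝ) < rv + (a2:ℝ) := by
        rw [hSω] at hlt; linarith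
      rw [hrv] at h
      exact_mod_cast h
    -- Count identities
    have hC0 : ((Finset.univ.erase z).filter
        (fun j => decide (v j < v z) ≠ E z j ω)).card + a1 = n - 1 := by
      have hfe : (Finset.univ.erase z).filter (fun j => decide (v j < v z) ≠ E z j ω)
          = (Finset.univ.erase z).filter (fun j => ¬(E z j ω = true)) := by
        apply Finset.filter_congr
        intro j hj
        have hjz : j ≠ z := (Finset.mem_erase.mp hj).1
        have hzj : z < j := by
          rw [Fin.lt_def]
          have h0 : (z : ℕ) = 0 := rfl
          rw [h0]
          rcases Nat.eq_zero_or_pos (j : ℕ) with h | h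
          · exact absurd (Fin.ext (h.trans h0.symm)) hjz
          · exact h
        have hvj : v j < v z := hv hzj
        rw [decide_eq_true hvj]
        constructor
        · intro h h'; exact h h'.symm
        · intro h h'; exact h h'.symm
      rw [hfe, add_comm]
      have := Finset.card_filter_add_card_filter_not
        (s := Finset.univ.erase z) (p := fun j => E z j ω = true)
      rw [ha1]
      rw [this]
      rw [Finset.card_erase_of_mem (Finset.mem_univ z), Finset.card_univ, Fintype.card_fin]
    have hCr : ((Finset.univ.erase r).filter
        (fun j => decide (v j < v r) ≠ E r j ω)).card = b1 + a2' := by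
      have hsplit : Finset.univ.erase r = Finset.Iio r ∪ Finset.Ioi r := by
        ext j
        simp only [Finset.mem_erase, Finset.mem_univ, and_true, Finset.mem_union,
          Finset.mem_Iio, Finset.mem_Ioi]
        exact ne_iff_lt_or_gt
      have hdisj : Disjoint (Finset.Iio r) (Finset.Ioi r) := by
        rw [Finset.disjoint_left]
        intro j hj hj'
        exact absurd (Finset.mem_Ioi.mp hj') (not_lt.mpr (le_of_lt (Finset.mem_Iio.mp hj)))
      rw [hsplit, Finset.filter_union,
        Finset.card_union_of_disjoint (Finset.disjoint_filter_filter hdisj)]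
      congr 1
      · rw [hb1]
        apply congrArg
        apply Finset.filter_congr
        intro j hj
        have hjr : j < r := Finset.mem_Iio.mp hj
        have hvr : ¬(v j < v r) := not_lt.mpr (le_of_lt (hv hjr))
        rw [decide_eq_false hvr]
        constructor
        · intro h
          cases h' : E r j ω
          · exact absurd h'.symm h
          · rfl
        · intro h h'
          rw [h] at h'
          exact Bool.false_ne_true h'
      · rw [ha2']
        apply congrArg
        apply Finset.filter_congr
        intro j hj
        have hjr : r < j := Finset.mem_Ioi.mp hj
        have hvr : v j < v r := hv hjr
        rw [decide_eq_true hvr]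
        constructor
        · intro h h'; exact h h'.symm
        · intro h h'; exact h h'.symm
    have ha2sum : a2 + a2' = n - 1 - (r : ℕ) := by
      rw [ha2def, ha2']
      rw [Finset.card_filter_add_card_filter_not
        (s := Finset.Ioi r) (p := fun j => E r j ω = true)]
      exact Fin.card_Ioi r
    show ((Finset.univ.erase r).filter
          (fun j => decide (v j < v r) ≠ E r j ω)).card <
        ((Finset.univ.erase z).filter
          (fun j => decide (v j < v z) ≠ E z j ω)).card
    have hrn' : (r : ℕ) < n := r.isLt
    omega
  -- final assembly
  have hBadMeas : MeasurableSet {ω | rv ≤ S ω} := measurableSet_le measurable_const hSmeas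
  have hcompl : (P {ω | rv ≤ S ω}ᶜ).toReal = 1 - (P {ω | rv ≤ S ω}).toReal := by
    rw [prob_compl_eq_one_sub hBadMeas,
      ENNReal.toReal_sub_of_le prob_le_one ENNReal.one_ne_top]
    simp
  calc 1 - δ ≤ 1 - (P {ω | rv ≤ S ω}).toReal := by linarith
    _ = (P {ω | rv ≤ S ω}ᶜ).toReal := hcompl.symm
    _ ≤ _ := ENNReal.toReal_mono (measure_ne_top P _) (measure_mono hsub)
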